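/- In any category C with pullbacks, an initial object 0 of C is van Kampen (as the colimit of the empty diagram) if and only if 0 is strictly initial, i.e., every map X → 0 is an isomorphism. -/
import Mathlib

open CategoryTheory CategoryTheory.Limits

universe v u

/-- In a category with pullbacks, an initial object, viewed as the colimit of the
empty diagram, is a van Kampen colimit if and only if it is strictly initial,
i.e. every map into it is an isomorphism. -/
theorem initial_isVanKampen_iff_strict {C : Type u} [Category.{v} C]
    [HasPullbacks C] {I : C} (hI : IsInitial I) :
    IsVanKampenColimit (asEmptyCocone I) ↔ ∀ (X : C) (f : X ⟶ I), IsIso f := by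
  constructor
  · intro h X f
    have hX : Nonempty (IsColimit (asEmptyCocone X)) := by
      rw [h (asEmptyCocone X) { app := fun j => j.as.elim } f
        (by ext ⟨⟨⟩⟩) (by rintro ⟨⟨⟩⟩)]
      rintro ⟨⟨⟩⟩
    obtain ⟨hX⟩ := hX
    -- X is initial, so f is an iso
    have hX' : IsInitial X := IsColimit.ofIsoColimit hX (Cocones.ext (Iso.refl X)
      (by rintro ⟨⟨⟩⟩))
    exact ⟨hI.to X, hX'.hom_ext _ _, hI.hom_ext _ _⟩
  · intro h
    haveI : HasInitial C := hI.hasInitial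
    haveI : HasStrictInitialObjects C :=
      hasStrictInitialObjects_of_initial_is_strict fun A f => by
        have := h A (f ≫ (initialIsoIsInitial hI).hom)
        have : IsIso ((f ≫ (initialIsoIsInitial hI).hom) ≫ (initialIsoIsInitial hI).inv) := by
          infer_instance
        simpa using this
    exact IsInitial.isVanKampenColimit hI
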